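/- Let κ > ω be a regular cardinal. If 𝔰_κ > κ, then κ satisfies the partition relation κ → (κ)²₂ (hence κ is weakly compact). -/

import Mathlib

open Cardinal

lemma aux_seq {T : Type u} [LinearOrder T] [WellFoundedLT T] {κ : Cardinal.{u}}
    (hreg : κ.IsRegular) (b' : Set T) (hb' : #b' = κ)
    (hIio : ∀ x : T, #(Set.Iio x) < κ) (S : T → Set T) (hS : ∀ z, #(S z) < κ) :
    ∃ f : T → T, (∀ x, f x ∈ b') ∧ ∀ y x : T, y < x → f y < f x ∧ f x ∉ S (f y) := by
  have haleph : ℵ₀ ≤ κ := hreg.aleph0_le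
  have hIic : ∀ z : T, #(Set.Iic z) < κ := by
    intro z
    rw [← Set.Iio_insert]
    exact (mk_insert_le).trans_lt (add_lt_of_lt haleph (hIio z) (one_lt_aleph0.trans_le haleph))
  have key : ∀ (x : T) (g : ∀ y, y < x → T),
      ∃ z, z ∈ b' \ ⋃ y : Set.Iio x, (S (g y y.2) ∪ Set.Iic (g y y.2)) := by
    intro x g
    set u := ⋃ y : Set.Iio x, (S (g y y.2) ∪ Set.Iic (g y y.2)) with hu
    have hucard : #u < κ := by
      rw [hu, (card_iUnion_lt_iff_forall_of_isRegular hreg (hIio x))]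
      intro y
      exact (mk_union_le _ _).trans_lt (add_lt_of_lt haleph (hS _) (hIic _))
    by_contra h
    push_neg at h
    have hsub : b' ⊆ u := fun z hz => by
      by_contra hzu; exact (h z) ⟨hz, hzu⟩
    exact absurd (hb' ▸ mk_le_mk_of_subset hsub) (not_le.2 hucard)
  obtain ⟨f, hfeq⟩ : ∃ f : T → T, ∀ x, f x = (key x fun y _ => f y).choose :=
    ⟨IsWellFounded.fix (· < ·) (fun x g => (key x g).choose),
     fun x => IsWellFounded.fix_eq (· < ·) (fun x g => (key x g).choose) x⟩
  have hf : ∀ x : T, f x ∈ b' \ ⋃ y : Set.Iio x, (S (f y) ∪ Set.Iic (f y)) := by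
    intro x
    rw [hfeq x]
    exact (key x fun y _ => f y).choose_spec
  refine ⟨f, fun x => (hf x).1, fun y x hyx => ?_⟩
  have := (hf x).2
  rw [Set.mem_iUnion] at this
  push_neg at this
  have h2 := this ⟨y, hyx⟩
  rw [Set.mem_union] at h2
  push_neg at h2
  exact ⟨not_le.1 (fun h => h2.2 h), h2.1⟩

/-- `a` splits `b` (as subsets of a set of order type `κ.ord`). -/
def Splits (κ : Cardinal) (a b : Set κ.ord.ToType) : Prop :=
  #↥(b ∩ a) = κ ∧ #↥(b \ a) = κ

/-- The splitting number `𝔰_κ`. -/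
noncomputable def splittingNumber (κ : Cardinal) : Cardinal :=
  sInf {c | ∃ F : Set (Set κ.ord.ToType), #↥F = c ∧
    ∀ b : Set κ.ord.ToType, #↥b = κ → ∃ a ∈ F, Splits κ a b}

/-- Suzuki: if `κ > ω` is regular and `𝔰_κ > κ`, then `κ → (κ)²₂`:
every 2-coloring of pairs from `κ` has a homogeneous set of size `κ`. -/
theorem stmt_4 (κ : Cardinal) (hreg : κ.IsRegular) (hκ : ℵ₀ < κ)
    (hs : κ < splittingNumber κ) :
    ∀ c : κ.ord.ToType → κ.ord.ToType → Fin 2,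
      ∃ H : Set κ.ord.ToType, #↥H = κ ∧
        ∃ i : Fin 2, ∀ x ∈ H, ∀ y ∈ H, x < y → c x y = i := by
  intro c
  have haleph : ℵ₀ ≤ κ := hreg.aleph0_le
  have hT : #(κ.ord.ToType) = κ := mk_ord_toType κ
  set A : κ.ord.ToType → Set κ.ord.ToType := fun x => {y | c x y = 0} with hA
  -- get an unsplit set b
  obtain ⟨b, hb, hnsp⟩ : ∃ b : Set κ.ord.ToType, #b = κ ∧ ∀ x, ¬ Splits κ (A x) b := by
    by_contra h
    push_neg at h
    have hmem : #(Set.range A) ∈ {c | ∃ F : Set (Set κ.ord.ToType), #↥F = c ∧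
        ∀ b : Set κ.ord.ToType, #↥b = κ → ∃ a ∈ F, Splits κ a b} := by
      refine ⟨Set.range A, rfl, fun b hb => ?_⟩
      obtain ⟨x, hx⟩ := h b hb
      exact ⟨A x, ⟨x, rfl⟩, hx⟩
    have h1 : splittingNumber κ ≤ #(Set.range A) := csInf_le' hmem
    have h2 : #(Set.range A) ≤ κ := mk_range_le.trans_eq hT
    exact absurd (h1.trans h2) (not_le.2 hs)
  -- choose the big color for each x
  have hfin2 : ∀ j : Fin 2, j ≠ 1 ↔ j = 0 := by decide
  have claim : ∀ x, ∃ j : Fin 2, #{y | y ∈ b ∧ c x y ≠ j} < κ := by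
    intro x
    have hsub0 : {y | y ∈ b ∧ c x y ≠ 0} = b \ A x := rfl
    have hsub1 : {y | y ∈ b ∧ c x y ≠ 1} = b ∩ A x := by
      ext y
      simp only [Set.mem_setOf_eq, Set.mem_inter_iff, hA, hfin2]
    by_cases h0 : #↥(b \ A x) < κ
    · exact ⟨0, hsub0 ▸ h0⟩
    · have heq : #↥(b \ A x) = κ :=
        le_antisymm ((mk_le_mk_of_subset Set.diff_subset).trans_eq hb) (not_lt.1 h0)
      have hne : #↥(b ∩ A x) ≠ κ := fun h => hnsp x ⟨h, heq⟩
      exact ⟨1, hsub1 ▸ lt_of_le_of_ne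
        ((mk_le_mk_of_subset Set.inter_subset_left).trans_eq hb) hne⟩
  choose i hi using claim
  -- pigeonhole to get constant color on a big subset
  obtain ⟨j0, hj0⟩ : ∃ j : Fin 2, #{y | y ∈ b ∧ i y = j} = κ := by
    by_contra h
    push_neg at h
    have hlt : ∀ j : Fin 2, #{y | y ∈ b ∧ i y = j} < κ := fun j =>
      lt_of_le_of_ne ((mk_le_mk_of_subset (fun y hy => hy.1)).trans_eq hb) (h j)
    have hcover : b ⊆ {y | y ∈ b ∧ i y = 0} ∪ {y | y ∈ b ∧ i y = 1} := by
      intro y hy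
      rcases (by decide : ∀ j : Fin 2, j = 0 ∨ j = 1) (i y) with h' | h'
      · exact Or.inl ⟨hy, h'⟩
      · exact Or.inr ⟨hy, h'⟩
    have : κ ≤ #({y | y ∈ b ∧ i y = 0} ∪ {y | y ∈ b ∧ i y = 1} : Set κ.ord.ToType) :=
      le_of_eq_of_le hb.symm (mk_le_mk_of_subset hcover)
    exact absurd (this.trans (mk_union_le _ _))
      (not_le.2 (add_lt_of_lt haleph (hlt 0) (hlt 1)))
  set b' : Set κ.ord.ToType := {y | y ∈ b ∧ i y = j0} with hb'def
  set S : κ.ord.ToType → Set κ.ord.ToType := fun z => {y | y ∈ b ∧ c z y ≠ i z} with hSdef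
  obtain ⟨f, hf1, hf2⟩ := aux_seq hreg b' hj0 (fun x => mk_Iio_ord_toType x) S hi
  have hmono : StrictMono f := fun y x h => (hf2 y x h).1
  refine ⟨Set.range f, by rw [mk_range_eq f hmono.injective, hT], j0, ?_⟩
  rintro x ⟨a, rfl⟩ y ⟨a', rfl⟩ hxy
  have hab : a < a' := hmono.lt_iff_lt.1 hxy
  have h2 := (hf2 a a' hab).2
  have hyb : f a' ∈ b := (hf1 a').1
  have : ¬(f a' ∈ b ∧ c (f a) (f a') ≠ i (f a)) := h2
  have hcy : c (f a) (f a') = i (f a) := by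
    by_contra hc
    exact this ⟨hyb, hc⟩
  rw [hcy, (hf1 a).2]
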